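/- Division lemma in dimension two: if η is a holomorphic one-form germ at 0 ∈ ℂ² satisfying η ∧ d(xy) = 0, then there exists a holomorphic function germ a at 0 ∈ ℂ² such that η = a · d(xy). -/

import Mathlib

open Filter

noncomputable section Stmt9Aux

/-- Extension of an equality from a punctured neighborhood to the point. -/
lemma stmt9_eq_of_punctured {f g : ℂ → ℂ} {w : ℂ} (hf : ContinuousAt f w)
    (hg : ContinuousAt g w) (h : ∀ᶠ y in nhdsWithin w {w}ᶜ, f y = g y) : f w = g w := by
  have tf : Tendsto f (nhdsWithin w {w}ᶜ) (nhds (f w)) := hf.continuousWithinAt.tendsto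
  have tg : Tendsto g (nhdsWithin w {w}ᶜ) (nhds (g w)) := hg.continuousWithinAt.tendsto
  exact tendsto_nhds_unique (tf.congr' h) tg

/-- Expansion of a continuous multilinear map on the diagonal in `ℂ × ℂ`:
`s` records the slots receiving `e₁ = (1,0)`. -/
lemma stmt9_expand (n : ℕ) (P : ContinuousMultilinearMap ℂ (fun _ : Fin n => ℂ × ℂ) ℂ) (x y : ℂ) :
    P (fun _ => (x, y)) = ∑ s : Finset (Fin n),
      x ^ s.card * y ^ (n - s.card) * P (fun i => if i ∈ s then ((1 : ℂ), (0 : ℂ)) else (0, 1)) := by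
  classical
  have h1 : (fun _ : Fin n => ((x, y) : ℂ × ℂ))
      = (fun _ : Fin n => (x • ((1 : ℂ), (0 : ℂ)) : ℂ × ℂ)) + fun _ => y • ((0 : ℂ), (1 : ℂ)) := by
    funext i
    simp [Prod.ext_iff]
  rw [show P (fun _ => ((x, y) : ℂ × ℂ)) = P.toMultilinearMap (fun _ => ((x, y) : ℂ × ℂ)) from rfl,
    h1, P.toMultilinearMap.map_add_univ]
  refine Finset.sum_congr rfl fun s _ => ?_
  have h2 : (Finset.piecewise s (fun _ => (x • ((1 : ℂ), (0 : ℂ)) : ℂ × ℂ))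
        (fun _ => y • ((0 : ℂ), (1 : ℂ))))
      = fun i => (if i ∈ s then x else y) • (if i ∈ s then ((1 : ℂ), (0 : ℂ)) else (0, 1)) := by
    funext i
    by_cases h : i ∈ s <;> simp [Finset.piecewise, h]
  rw [h2, P.toMultilinearMap.map_smul_univ]
  have h3 : (∏ i : Fin n, if i ∈ s then x else y) = x ^ s.card * y ^ (n - s.card) := by
    rw [Finset.prod_ite]
    simp [Finset.filter_mem_eq_inter, Finset.filter_not, Finset.card_sdiff_of_subset (Finset.subset_univ s)]
  rw [h3]
  simp only [smul_eq_mul, ContinuousMultilinearMap.coe_coe]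

/-- The monomial continuous multilinear map: `snd` on the first `j` slots, `fst` on the rest. -/
def stmt9_mono (m j : ℕ) : ContinuousMultilinearMap ℂ (fun _ : Fin m => ℂ × ℂ) ℂ :=
  (ContinuousMultilinearMap.mkPiAlgebra ℂ (Fin m) ℂ).compContinuousLinearMap
    (fun i => if (i : ℕ) < j then ContinuousLinearMap.snd ℂ ℂ ℂ else ContinuousLinearMap.fst ℂ ℂ ℂ)

lemma stmt9_mono_apply (m j : ℕ) (v : Fin m → ℂ × ℂ) :
    stmt9_mono m j v = ∏ i : Fin m, (if (i : ℕ) < j then (v i).2 else (v i).1) := by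
  rw [stmt9_mono, ContinuousMultilinearMap.compContinuousLinearMap_apply,
    ContinuousMultilinearMap.mkPiAlgebra_apply]
  refine Finset.prod_congr rfl fun i _ => ?_
  by_cases h : (i : ℕ) < j <;> simp [h]

lemma stmt9_card_filter_lt (m j : ℕ) (hj : j ≤ m) :
    (Finset.univ.filter (fun i : Fin m => (i : ℕ) < j)).card = j := by
  have : (Finset.univ.filter (fun i : Fin m => (i : ℕ) < j))
      = Finset.map (Fin.castLEEmb hj) Finset.univ := by
    ext a
    simp only [Finset.mem_filter, Finset.mem_map, Finset.mem_univ, true_and]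
    constructor
    · intro ha; exact ⟨⟨a, ha⟩, rfl⟩
    · rintro ⟨b, rfl⟩; exact b.2
  rw [this, Finset.card_map, Finset.card_univ, Fintype.card_fin]

lemma stmt9_mono_diag (m j : ℕ) (hj : j ≤ m) (x y : ℂ) :
    stmt9_mono m j (fun _ => (x, y)) = x ^ (m - j) * y ^ j := by
  rw [stmt9_mono_apply, Finset.prod_ite]
  simp only [Finset.prod_const]
  rw [stmt9_card_filter_lt m j hj]
  have : (Finset.univ.filter (fun i : Fin m => ¬ (i : ℕ) < j)).card = m - j := by
    have h2 := Finset.card_filter_add_card_filter_not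
      (s := (Finset.univ : Finset (Fin m))) (p := fun i : Fin m => (i : ℕ) < j)
    rw [stmt9_card_filter_lt m j hj, Finset.card_univ, Fintype.card_fin] at h2
    omega
  rw [this]
  ring

lemma stmt9_mono_norm_le (m j : ℕ) : ‖stmt9_mono m j‖ ≤ 1 := by
  refine ContinuousMultilinearMap.opNorm_le_bound zero_le_one fun v => ?_
  rw [stmt9_mono_apply, one_mul]
  calc ‖∏ i : Fin m, (if (i : ℕ) < j then (v i).2 else (v i).1)‖
      = ∏ i : Fin m, ‖if (i : ℕ) < j then (v i).2 else (v i).1‖ := norm_prod _ _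
    _ ≤ ∏ i : Fin m, ‖v i‖ := by
        refine Finset.prod_le_prod (fun i _ => norm_nonneg _) fun i _ => ?_
        by_cases h : (i : ℕ) < j <;> simp only [h, if_true, if_false]
        · exact norm_snd_le (v i)
        · exact norm_fst_le (v i)

end Stmt9Aux

/-- Division lemma: if `η = A dx + B dy` is a holomorphic one-form germ at `0 ∈ ℂ²`
with `η ∧ d(xy) = 0` (i.e. `A x - B y = 0`), then `η = a · d(xy)` for some
holomorphic germ `a`, i.e. `A = a y` and `B = a x` near `0`. -/
theorem stmt_9 (A B : ℂ × ℂ → ℂ) (U : Set (ℂ × ℂ)) (hU : U ∈ nhds (0 : ℂ × ℂ))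
    (hA : AnalyticOnNhd ℂ A U) (hB : AnalyticOnNhd ℂ B U)
    (hwedge : ∀ p ∈ U, A p * p.1 - B p * p.2 = 0) :
    ∃ (V : Set (ℂ × ℂ)) (a : ℂ × ℂ → ℂ), V ∈ nhds (0 : ℂ × ℂ) ∧ V ⊆ U ∧
      AnalyticOnNhd ℂ a V ∧ ∀ p ∈ V, A p = a p * p.2 ∧ B p = a p * p.1 := by
  classical
  have h0U : (0 : ℂ × ℂ) ∈ U := mem_of_mem_nhds hU
  obtain ⟨P, hPat⟩ := hA 0 h0U
  obtain ⟨RP, hP⟩ := hPat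
  obtain ⟨Q, hQat⟩ := hB 0 h0U
  obtain ⟨RQ, hQ⟩ := hQat
  obtain ⟨δ, hδ0, hδU⟩ := Metric.mem_nhds_iff.1 hU
  have hmin : (0 : ENNReal) < min RP RQ := lt_min hP.r_pos hQ.r_pos
  obtain ⟨r0, hr0pos, hr0lt⟩ := ENNReal.lt_iff_exists_nnreal_btwn.1 hmin
  have hr0P : (r0 : ENNReal) < P.radius := lt_of_lt_of_le (hr0lt.trans_le (min_le_left _ _)) hP.r_le
  have hr0Q : (r0 : ENNReal) < Q.radius := lt_of_lt_of_le (hr0lt.trans_le (min_le_right _ _)) hQ.r_le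
  obtain ⟨CP, hCP0, hCP⟩ := P.norm_mul_pow_le_of_lt_radius hr0P
  obtain ⟨CQ, hCQ0, hCQ⟩ := Q.norm_mul_pow_le_of_lt_radius hr0Q
  have hr0R : (0 : ℝ) < (r0 : ℝ) := by exact_mod_cast hr0pos
  -- the coefficients
  set β : ∀ n : ℕ, Finset (Fin n) → ℂ :=
    fun n s => P n (fun i => if i ∈ s then ((1 : ℂ), (0 : ℂ)) else (0, 1)) with hβ
  -- the candidate power series
  set S : FormalMultilinearSeries ℂ (ℂ × ℂ) ℂ :=
    fun m => ∑ s ∈ Finset.univ.erase (Finset.univ : Finset (Fin (m + 1))),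
      β (m + 1) s • stmt9_mono m (m - s.card) with hS
  -- the radius of `S`
  have hcard_le : ∀ (m : ℕ) (s : Finset (Fin (m + 1))),
      s ∈ Finset.univ.erase (Finset.univ : Finset (Fin (m + 1))) → s.card ≤ m := by
    intro m s hs
    have hne : s ≠ Finset.univ := (Finset.mem_erase.1 hs).1
    have := Finset.card_lt_card (Finset.ssubset_univ_iff.2 hne)
    rw [Finset.card_univ, Fintype.card_fin] at this
    omega
  have hSdiag : ∀ (m : ℕ) (x y : ℂ),
      S m (fun _ => (x, y)) = ∑ s ∈ Finset.univ.erase (Finset.univ : Finset (Fin (m + 1))),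
        β (m + 1) s * (x ^ s.card * y ^ (m - s.card)) := by
    intro m x y
    rw [hS]
    rw [ContinuousMultilinearMap.sum_apply]
    refine Finset.sum_congr rfl fun s hs => ?_
    rw [ContinuousMultilinearMap.smul_apply,
      stmt9_mono_diag m (m - s.card) (Nat.sub_le _ _) x y, smul_eq_mul]
    have hle := hcard_le m s hs
    have : m - (m - s.card) = s.card := by omega
    rw [this]
  have hβ_le : ∀ (n : ℕ) (s : Finset (Fin n)), ‖β n s‖ ≤ ‖P n‖ := by
    intro n s
    rw [hβ]
    refine le_trans (ContinuousMultilinearMap.le_opNorm _ _) ?_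
    have : ∀ i : Fin n, ‖if i ∈ s then ((1 : ℂ), (0 : ℂ)) else ((0 : ℂ), (1 : ℂ))‖ = 1 := by
      intro i
      by_cases h : i ∈ s <;> simp [h, Prod.norm_def]
    rw [Finset.prod_congr rfl fun i _ => this i]
    simp
  have hSnorm : ∀ m : ℕ, ‖S m‖ ≤ 2 ^ (m + 1) * ‖P (m + 1)‖ := by
    intro m
    rw [hS]
    refine le_trans (norm_sum_le _ _) ?_
    have hterm : ∀ s ∈ Finset.univ.erase (Finset.univ : Finset (Fin (m + 1))),
        ‖β (m + 1) s • stmt9_mono m (m - s.card)‖ ≤ ‖P (m + 1)‖ := by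
      intro s _
      refine le_trans (ContinuousMultilinearMap.opNorm_smul_le _ _) ?_
      calc ‖β (m + 1) s‖ * ‖stmt9_mono m (m - s.card)‖
          ≤ ‖P (m + 1)‖ * 1 :=
            mul_le_mul (hβ_le _ _) (stmt9_mono_norm_le _ _) (norm_nonneg _) (norm_nonneg _)
        _ = ‖P (m + 1)‖ := mul_one _
    refine le_trans (Finset.sum_le_sum hterm) ?_
    rw [Finset.sum_const, nsmul_eq_mul]
    refine mul_le_mul_of_nonneg_right ?_ (norm_nonneg _)
    have h1 : (Finset.univ.erase (Finset.univ : Finset (Fin (m + 1)))).card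
        ≤ Finset.univ.card := Finset.card_le_card (Finset.erase_subset _ _)
    rw [Finset.card_univ, Fintype.card_finset, Fintype.card_fin] at h1
    calc ((Finset.univ.erase (Finset.univ : Finset (Fin (m + 1)))).card : ℝ)
        ≤ (2 ^ (m + 1) : ℕ) := by exact_mod_cast h1
      _ = 2 ^ (m + 1) := by push_cast; ring
  -- radius bound
  have hρrad : ((r0 / 2 : NNReal) : ENNReal) ≤ S.radius := by
    refine S.le_radius_of_bound (2 * CP / (r0 : ℝ)) fun m => ?_
    have hb : ‖S m‖ * ((r0 / 2 : NNReal) : ℝ) ^ m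
        ≤ 2 ^ (m + 1) * ‖P (m + 1)‖ * ((r0 : ℝ) / 2) ^ m := by
      have : ((r0 / 2 : NNReal) : ℝ) = (r0 : ℝ) / 2 := by
        push_cast; ring
      rw [this]
      exact mul_le_mul_of_nonneg_right (hSnorm m) (by positivity)
    refine hb.trans ?_
    have hP1 : ‖P (m + 1)‖ * (r0 : ℝ) ^ (m + 1) ≤ CP := hCP (m + 1)
    have key : 2 ^ (m + 1) * ‖P (m + 1)‖ * ((r0 : ℝ) / 2) ^ m
        = (2 / (r0 : ℝ)) * (‖P (m + 1)‖ * (r0 : ℝ) ^ (m + 1)) * (1 / 2) ^ m * 2 ^ m := by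
      field_simp
      ring
    rw [key]
    have h2 : (1 / 2 : ℝ) ^ m * 2 ^ m = 1 := by
      rw [← mul_pow]
      norm_num
    rw [mul_assoc, h2, mul_one]
    have : (2 / (r0 : ℝ)) * (‖P (m + 1)‖ * (r0 : ℝ) ^ (m + 1)) ≤ (2 / (r0 : ℝ)) * CP :=
      mul_le_mul_of_nonneg_left hP1 (by positivity)
    refine this.trans (le_of_eq ?_)
    field_simp
  -- the neighborhood radius
  set v : ℝ := min δ ((r0 : ℝ) / 2) with hv
  have hv0 : 0 < v := lt_min hδ0 (by positivity)
  have hvδ : v ≤ δ := min_le_left _ _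
  have hvr0 : v ≤ (r0 : ℝ) / 2 := min_le_right _ _
  have hmemU : ∀ w : ℂ × ℂ, ‖w‖ < v → w ∈ U := by
    intro w hw
    exact hδU (by simpa [Metric.mem_ball, dist_zero_right] using lt_of_lt_of_le hw hvδ)
  have hmemP : ∀ w : ℂ × ℂ, ‖w‖ < v → w ∈ Metric.eball (0 : ℂ × ℂ) RP := by
    intro w hw
    rw [mem_emetric_ball_zero_iff]
    have h1 : ‖w‖₊ < r0 := by
      rw [← NNReal.coe_lt_coe]
      calc (‖w‖₊ : ℝ) = ‖w‖ := rfl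
        _ < v := hw
        _ ≤ (r0 : ℝ) / 2 := hvr0
        _ ≤ (r0 : ℝ) := by linarith
    calc (‖w‖₊ : ENNReal) < (r0 : ENNReal) := by exact_mod_cast h1
      _ < RP ⊓ RQ := hr0lt
      _ ≤ RP := min_le_left _ _
  have hmemQ : ∀ w : ℂ × ℂ, ‖w‖ < v → w ∈ Metric.eball (0 : ℂ × ℂ) RQ := by
    intro w hw
    rw [mem_emetric_ball_zero_iff]
    have h1 : ‖w‖₊ < r0 := by
      rw [← NNReal.coe_lt_coe]
      calc (‖w‖₊ : ℝ) = ‖w‖ := rfl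
        _ < v := hw
        _ ≤ (r0 : ℝ) / 2 := hvr0
        _ ≤ (r0 : ℝ) := by linarith
    calc (‖w‖₊ : ENNReal) < (r0 : ENNReal) := by exact_mod_cast h1
      _ < RP ⊓ RQ := hr0lt
      _ ≤ RQ := min_le_right _ _
  -- key coefficient identity from the wedge condition, via restriction to lines
  have hkey : ∀ z : ℂ × ℂ, ‖z‖ < v → ∀ n : ℕ,
      P n (fun _ => z) * z.1 = Q n (fun _ => z) * z.2 := by
    intro z hz n
    set c : ℕ → ℂ := fun n => P n (fun _ => z) with hc
    set d : ℕ → ℂ := fun n => Q n (fun _ => z) with hd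
    set e : ℕ → ℂ := fun n => c n * z.1 - d n * z.2 with he
    set T : FormalMultilinearSeries ℂ ℂ ℂ := FormalMultilinearSeries.ofScalars ℂ e with hT
    have hzr0 : ‖z‖ ≤ (r0 : ℝ) := le_of_lt (lt_of_lt_of_le hz (by linarith))
    have hcb : ∀ n : ℕ, ‖c n‖ ≤ CP := by
      intro n
      rw [hc]
      calc ‖P n (fun _ => z)‖ ≤ ‖P n‖ * ∏ _i : Fin n, ‖z‖ :=
            ContinuousMultilinearMap.le_opNorm _ _
        _ = ‖P n‖ * ‖z‖ ^ n := by rw [Finset.prod_const, Finset.card_univ, Fintype.card_fin]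
        _ ≤ ‖P n‖ * (r0 : ℝ) ^ n := by
            exact mul_le_mul_of_nonneg_left (pow_le_pow_left₀ (norm_nonneg _) hzr0 n)
              (norm_nonneg _)
        _ ≤ CP := hCP n
    have hdb : ∀ n : ℕ, ‖d n‖ ≤ CQ := by
      intro n
      rw [hd]
      calc ‖Q n (fun _ => z)‖ ≤ ‖Q n‖ * ∏ _i : Fin n, ‖z‖ :=
            ContinuousMultilinearMap.le_opNorm _ _
        _ = ‖Q n‖ * ‖z‖ ^ n := by rw [Finset.prod_const, Finset.card_univ, Fintype.card_fin]
        _ ≤ ‖Q n‖ * (r0 : ℝ) ^ n := by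
            exact mul_le_mul_of_nonneg_left (pow_le_pow_left₀ (norm_nonneg _) hzr0 n)
              (norm_nonneg _)
        _ ≤ CQ := hCQ n
    have heb : ∀ n : ℕ, ‖e n‖ ≤ CP * ‖z‖ + CQ * ‖z‖ := by
      intro n
      rw [he]
      refine le_trans (norm_sub_le _ _) ?_
      gcongr
      · calc ‖c n * z.1‖ = ‖c n‖ * ‖z.1‖ := norm_mul _ _
          _ ≤ CP * ‖z‖ := mul_le_mul (hcb n) (norm_fst_le z) (norm_nonneg _)
              (le_of_lt hCP0)
      · calc ‖d n * z.2‖ = ‖d n‖ * ‖z.2‖ := norm_mul _ _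
          _ ≤ CQ * ‖z‖ := mul_le_mul (hdb n) (norm_snd_le z) (norm_nonneg _)
              (le_of_lt hCQ0)
    have hTrad : (1 : ENNReal) ≤ T.radius := by
      have := T.le_radius_of_bound (CP * ‖z‖ + CQ * ‖z‖) (r := 1) fun n => ?_
      · simpa using this
      · rw [hT]
        have hnorm : ‖FormalMultilinearSeries.ofScalars ℂ e n‖ ≤ ‖e n‖ := by
          rw [FormalMultilinearSeries.ofScalars]
          refine le_trans (ContinuousMultilinearMap.opNorm_smul_le _ _) ?_
          have h1 : ‖ContinuousMultilinearMap.mkPiAlgebraFin ℂ n ℂ‖ ≤ 1 := by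
            refine le_trans ContinuousMultilinearMap.norm_mkPiAlgebraFin_le ?_
            simp
          calc ‖e n‖ * ‖ContinuousMultilinearMap.mkPiAlgebraFin ℂ n ℂ‖ ≤ ‖e n‖ * 1 :=
                mul_le_mul_of_nonneg_left h1 (norm_nonneg _)
            _ = ‖e n‖ := mul_one _
        simpa using hnorm.trans (heb n)
    -- the function vanishes near 0
    have hfun0 : ∀ t : ℂ, ‖t‖ < 1 → A (t • z) * z.1 - B (t • z) * z.2 = 0 := by
      have hne : ∀ t : ℂ, t ≠ 0 → ‖t‖ < 1 → A (t • z) * z.1 - B (t • z) * z.2 = 0 := by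
        intro t ht0 ht1
        have htz : ‖t • z‖ < v := by
          rw [norm_smul]
          calc ‖t‖ * ‖z‖ ≤ 1 * ‖z‖ :=
                mul_le_mul_of_nonneg_right (le_of_lt ht1) (norm_nonneg _)
            _ = ‖z‖ := one_mul _
            _ < v := hz
        have hw := hwedge (t • z) (hmemU _ htz)
        have h1 : (t • z).1 = t * z.1 := rfl
        have h2 : (t • z).2 = t * z.2 := rfl
        rw [h1, h2] at hw
        have h3 : t * (A (t • z) * z.1 - B (t • z) * z.2) = 0 := by
          linear_combination hw
        exact (mul_eq_zero.1 h3).resolve_left ht0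
      intro t ht1
      by_cases ht0 : t = 0
      · subst ht0
        have hsm : Continuous (fun t : ℂ => t • z) := continuous_id.smul continuous_const
        have hA0 : ContinuousAt A ((0 : ℂ) • z) := by
          rw [zero_smul]
          exact (hA 0 h0U).continuousAt
        have hB0 : ContinuousAt B ((0 : ℂ) • z) := by
          rw [zero_smul]
          exact (hB 0 h0U).continuousAt
        have hAc : ContinuousAt (fun t : ℂ => A (t • z)) 0 :=
          ContinuousAt.comp (g := A) (f := fun t : ℂ => t • z) (x := (0 : ℂ)) hA0
            hsm.continuousAt
        have hBc : ContinuousAt (fun t : ℂ => B (t • z)) 0 :=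
          ContinuousAt.comp (g := B) (f := fun t : ℂ => t • z) (x := (0 : ℂ)) hB0
            hsm.continuousAt
        have hcA : ContinuousAt (fun t : ℂ => A (t • z) * z.1 - B (t • z) * z.2) 0 :=
          (hAc.mul continuousAt_const).sub (hBc.mul continuousAt_const)
        have h0 := stmt9_eq_of_punctured (f := fun t : ℂ => A (t • z) * z.1 - B (t • z) * z.2)
          (g := fun _ => (0 : ℂ)) hcA continuousAt_const ?_
        · exact h0
        · filter_upwards [mem_nhdsWithin_of_mem_nhds (Metric.ball_mem_nhds (0 : ℂ) one_pos),
            self_mem_nhdsWithin] with t h1 h2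
          rw [Metric.mem_ball, dist_zero_right] at h1
          exact hne t (Set.mem_compl_singleton_iff.1 h2) h1
      · exact hne t ht0 ht1
    have hT0 : HasFPowerSeriesOnBall (fun t : ℂ => A (t • z) * z.1 - B (t • z) * z.2) T 0 1 := by
      refine ⟨hTrad, zero_lt_one, ?_⟩
      intro t ht
      rw [mem_emetric_ball_zero_iff] at ht
      have ht1 : ‖t‖ < 1 := by exact_mod_cast (show ((‖t‖₊ : NNReal) : ENNReal) < 1 from ht)
      have htz : ‖t • z‖ < v := by
        rw [norm_smul]
        calc ‖t‖ * ‖z‖ ≤ 1 * ‖z‖ := by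
              exact mul_le_mul_of_nonneg_right (le_of_lt ht1) (norm_nonneg _)
          _ = ‖z‖ := one_mul _
          _ < v := hz
      have h1 : HasSum (fun n => P n (fun _ => t • z)) (A (t • z)) := by
        have := hP.hasSum (hmemP _ htz)
        rwa [zero_add] at this
      have h2 : HasSum (fun n => Q n (fun _ => t • z)) (B (t • z)) := by
        have := hQ.hasSum (hmemQ _ htz)
        rwa [zero_add] at this
      have h3 : (fun n => P n (fun _ => t • z) * z.1 - Q n (fun _ => t • z) * z.2)
          = fun n => T n fun _ => t := by
        funext n
        have hp' : P n (fun _ => t • z) = t ^ n * c n := by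
          have h0 : P n (fun _ : Fin n => t • z)
              = (P n).toMultilinearMap (fun i : Fin n => t • (fun _ : Fin n => z) i) := rfl
          rw [h0, (P n).toMultilinearMap.map_smul_univ]
          simp [hc, smul_eq_mul]
        have hq' : Q n (fun _ => t • z) = t ^ n * d n := by
          have h0 : Q n (fun _ : Fin n => t • z)
              = (Q n).toMultilinearMap (fun i : Fin n => t • (fun _ : Fin n => z) i) := rfl
          rw [h0, (Q n).toMultilinearMap.map_smul_univ]
          simp [hd, smul_eq_mul]
        rw [hp', hq', hT, FormalMultilinearSeries.ofScalars_apply_eq, he, smul_eq_mul]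
        ring
      rw [zero_add, ← h3]
      exact (h1.mul_right z.1).sub (h2.mul_right z.2)
    have hTzero : T = 0 := by
      refine hT0.hasFPowerSeriesAt.eq_zero_of_eventually ?_
      refine Filter.eventuallyEq_of_mem (Metric.ball_mem_nhds (0 : ℂ) one_pos) fun t ht => ?_
      rw [Metric.mem_ball, dist_zero_right] at ht
      exact hfun0 t ht
    have hen : e n = 0 := by
      have h4 : T n (fun _ => (1 : ℂ)) = 0 := by rw [hTzero]; simp
      rw [hT, FormalMultilinearSeries.ofScalars_apply_eq] at h4
      simpa using h4
    rw [he] at hen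
    have := sub_eq_zero.1 hen
    simpa [hc, hd] using this
  -- the pure `x` coefficient vanishes
  have hβuniv : ∀ n : ℕ, β n Finset.univ = 0 := by
    intro n
    set x : ℂ := ((v / 2 : ℝ) : ℂ) with hx
    have hx0 : x ≠ 0 := by
      rw [hx]
      simp only [ne_eq, Complex.ofReal_eq_zero]
      linarith
    have hznorm : ‖((x, 0) : ℂ × ℂ)‖ < v := by
      rw [Prod.norm_def]
      simp only [norm_zero]
      rw [hx]
      rw [Complex.norm_real]
      rw [Real.norm_eq_abs, abs_of_pos (by linarith)]
      simp only [sup_le_iff, max_lt_iff]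
      constructor <;> linarith
    have hk := hkey ((x, 0) : ℂ × ℂ) hznorm n
    simp only [mul_zero] at hk
    have hPn0 : P n (fun _ => ((x, 0) : ℂ × ℂ)) = 0 :=
      (mul_eq_zero.1 hk).resolve_right hx0
    rw [stmt9_expand n (P n) x 0] at hPn0
    have hsingle : ∑ s : Finset (Fin n),
        x ^ s.card * (0 : ℂ) ^ (n - s.card) *
          P n (fun i => if i ∈ s then ((1 : ℂ), (0 : ℂ)) else (0, 1))
        = x ^ n * P n (fun i => if i ∈ (Finset.univ : Finset (Fin n)) then ((1 : ℂ), (0 : ℂ))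
            else (0, 1)) := by
      rw [Finset.sum_eq_single Finset.univ]
      · rw [Finset.card_univ, Fintype.card_fin, Nat.sub_self, pow_zero, mul_one]
      · intro s _ hne
        have h1 : s.card < n := by
          have := Finset.card_lt_card (Finset.ssubset_univ_iff.2 hne)
          rwa [Finset.card_univ, Fintype.card_fin] at this
        have h2 : (0 : ℂ) ^ (n - s.card) = 0 := by
          apply zero_pow
          omega
        rw [h2]
        ring
      · intro h
        exact absurd (Finset.mem_univ _) h
    rw [hsingle] at hPn0
    have := (mul_eq_zero.1 hPn0).resolve_left (pow_ne_zero n hx0)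
    simp only [hβ]
    exact this
  -- the series of `A` is divisible by `y`
  have hPdiag : ∀ (m : ℕ) (x y : ℂ),
      P (m + 1) (fun _ => (x, y)) = y * S m (fun _ => (x, y)) := by
    intro m x y
    rw [stmt9_expand (m + 1) (P (m + 1)) x y, hSdiag m x y]
    have hsplit : (∑ s : Finset (Fin (m + 1)), x ^ s.card * y ^ (m + 1 - s.card) *
          P (m + 1) (fun i => if i ∈ s then ((1 : ℂ), (0 : ℂ)) else (0, 1)))
        = (∑ s ∈ Finset.univ.erase (Finset.univ : Finset (Fin (m + 1))),
            x ^ s.card * y ^ (m + 1 - s.card) *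
              P (m + 1) (fun i => if i ∈ s then ((1 : ℂ), (0 : ℂ)) else (0, 1)))
          + x ^ (Finset.univ : Finset (Fin (m + 1))).card
            * y ^ (m + 1 - (Finset.univ : Finset (Fin (m + 1))).card) *
            P (m + 1) (fun i => if i ∈ (Finset.univ : Finset (Fin (m + 1)))
              then ((1 : ℂ), (0 : ℂ)) else (0, 1)) :=
      (Finset.sum_erase_add (Finset.univ : Finset (Finset (Fin (m + 1))))
        (fun s => x ^ s.card * y ^ (m + 1 - s.card) *
          P (m + 1) (fun i => if i ∈ s then ((1 : ℂ), (0 : ℂ)) else (0, 1)))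
        (Finset.mem_univ Finset.univ)).symm
    rw [hsplit]
    have huniv0 : x ^ (Finset.univ : Finset (Fin (m + 1))).card
        * y ^ (m + 1 - (Finset.univ : Finset (Fin (m + 1))).card) *
        P (m + 1) (fun i => if i ∈ (Finset.univ : Finset (Fin (m + 1))) then ((1 : ℂ), (0 : ℂ))
          else (0, 1)) = 0 := by
      have h0 := hβuniv (m + 1)
      simp only [hβ] at h0
      rw [h0]
      ring
    rw [huniv0, add_zero, Finset.mul_sum]
    refine Finset.sum_congr rfl fun s hs => ?_
    have hle := hcard_le m s hs
    have hpow : y ^ (m + 1 - s.card) = y ^ (m - s.card) * y := by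
      rw [← pow_succ]
      congr 1
      omega
    rw [hpow]
    simp only [hβ]
    ring
  -- the zeroth coefficients vanish
  have hc0 : ∀ w : ℂ × ℂ, P 0 (fun _ => w) = 0 := by
    intro w
    have h := hβuniv 0
    simp only [hβ] at h
    have heq : (fun _ : Fin 0 => w)
        = (fun i : Fin 0 => if i ∈ (Finset.univ : Finset (Fin 0)) then ((1 : ℂ), (0 : ℂ))
            else (0, 1)) := funext fun i => i.elim0
    rw [heq]
    exact h
  have hd0 : ∀ w : ℂ × ℂ, Q 0 (fun _ => w) = 0 := by
    intro w
    set y : ℂ := ((v / 2 : ℝ) : ℂ) with hy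
    have hy0 : y ≠ 0 := by
      rw [hy]
      simp only [ne_eq, Complex.ofReal_eq_zero]
      linarith
    have hznorm : ‖((0, y) : ℂ × ℂ)‖ < v := by
      rw [Prod.norm_def]
      simp only [norm_zero]
      rw [hy, Complex.norm_real, Real.norm_eq_abs, abs_of_pos (by linarith)]
      simp only [sup_le_iff, max_lt_iff]
      constructor <;> linarith
    have hk := hkey ((0, y) : ℂ × ℂ) hznorm 0
    simp only [mul_zero] at hk
    have h1 : Q 0 (fun _ => ((0, y) : ℂ × ℂ)) = 0 := by
      have hk2 : (0 : ℂ) = Q 0 (fun _ => ((0, y) : ℂ × ℂ)) * y := by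
        rw [← hk]
      exact (mul_eq_zero.1 hk2.symm).resolve_right hy0
    have heq : (fun _ : Fin 0 => w) = (fun _ : Fin 0 => ((0, y) : ℂ × ℂ)) :=
      funext fun i => i.elim0
    rw [heq]
    exact h1
  -- the series of `B` is `x` times the series of `a`
  have hQdiag1 : ∀ (m : ℕ) (z : ℂ × ℂ), ‖z‖ < v → z.2 ≠ 0 →
      Q (m + 1) (fun _ => z) = z.1 * S m (fun _ => z) := by
    intro m z hz hz2
    have hk := hkey z hz (m + 1)
    have hp := hPdiag m z.1 z.2
    rw [Prod.mk.eta] at hp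
    rw [hp] at hk
    have h1 : z.2 * (Q (m + 1) (fun _ => z)) = z.2 * (z.1 * S m (fun _ => z)) := by
      linear_combination -hk
    exact mul_left_cancel₀ hz2 h1
  have hQdiag : ∀ (m : ℕ) (z : ℂ × ℂ), ‖z‖ < v →
      Q (m + 1) (fun _ => z) = z.1 * S m (fun _ => z) := by
    intro m z hz
    by_cases hz2 : z.2 = 0
    · have hzz : z = (z.1, (0 : ℂ)) := by
        rw [← hz2]
      have hcf : ContinuousAt (fun yy : ℂ => Q (m + 1) (fun _ => ((z.1, yy) : ℂ × ℂ))) 0 := by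
        refine Continuous.continuousAt ?_
        exact (Q (m + 1)).cont.comp
          (continuous_pi fun _ => continuous_const.prodMk continuous_id)
      have hcg : ContinuousAt (fun yy : ℂ => z.1 * S m (fun _ => ((z.1, yy) : ℂ × ℂ))) 0 := by
        refine Continuous.continuousAt ?_
        exact continuous_const.mul
          ((S m).cont.comp (continuous_pi fun _ => continuous_const.prodMk continuous_id))
      have h0 := stmt9_eq_of_punctured hcf hcg ?_
      · rw [hzz]
        exact h0
      · have hv2 : 0 < v - ‖z.1‖ := by
          have : ‖z.1‖ ≤ ‖z‖ := norm_fst_le z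
          linarith
        filter_upwards [mem_nhdsWithin_of_mem_nhds (Metric.ball_mem_nhds (0 : ℂ) hv2),
          self_mem_nhdsWithin] with yy h1 h2
        rw [Metric.mem_ball, dist_zero_right] at h1
        have hnorm : ‖((z.1, yy) : ℂ × ℂ)‖ < v := by
          rw [Prod.norm_def]
          have hz1 : ‖z.1‖ ≤ ‖z‖ := norm_fst_le z
          have hz1n : (0 : ℝ) ≤ ‖z.1‖ := norm_nonneg _
          exact max_lt (by linarith) (by linarith)
        exact hQdiag1 m (z.1, yy) hnorm (Set.mem_compl_singleton_iff.1 h2)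
    · exact hQdiag1 m z hz hz2
  -- sum identities
  have hAeq : ∀ z : ℂ × ℂ, ‖z‖ < v → A z = z.2 * S.sum z := by
    intro z hz
    have hs : HasSum (fun n => P n fun _ => z) (A z) := by
      have := hP.hasSum (hmemP z hz)
      rwa [zero_add] at this
    have h1 : A z = ∑' n : ℕ, P n (fun _ => z) := hs.tsum_eq.symm
    rw [h1, Summable.tsum_eq_zero_add hs.summable, hc0 z, zero_add]
    have h2 : ∀ m : ℕ, P (m + 1) (fun _ => z) = z.2 * S m (fun _ => z) := by
      intro m
      have := hPdiag m z.1 z.2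
      rwa [Prod.mk.eta] at this
    rw [tsum_congr h2, tsum_mul_left]
    rfl
  have hBeq : ∀ z : ℂ × ℂ, ‖z‖ < v → B z = z.1 * S.sum z := by
    intro z hz
    have hs : HasSum (fun n => Q n fun _ => z) (B z) := by
      have := hQ.hasSum (hmemQ z hz)
      rwa [zero_add] at this
    have h1 : B z = ∑' n : ℕ, Q n (fun _ => z) := hs.tsum_eq.symm
    rw [h1, Summable.tsum_eq_zero_add hs.summable, hd0 z, zero_add]
    rw [tsum_congr (fun m => hQdiag m z hz), tsum_mul_left]
    rfl
  -- conclusion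
  have hρpos : (0 : ENNReal) < ((r0 / 2 : NNReal) : ENNReal) := by
    rw [ENNReal.coe_pos]
    have : (0 : NNReal) < r0 := by exact_mod_cast hr0pos
    positivity
  have hSrad0 : 0 < S.radius := lt_of_lt_of_le hρpos hρrad
  have hball := S.hasFPowerSeriesOnBall hSrad0
  refine ⟨Metric.ball 0 v, S.sum, Metric.ball_mem_nhds _ hv0, ?_, ?_, ?_⟩
  · intro p hp
    rw [Metric.mem_ball, dist_zero_right] at hp
    exact hmemU p hp
  · intro p hp
    rw [Metric.mem_ball, dist_zero_right] at hp
    refine hball.analyticAt_of_mem ?_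
    rw [mem_emetric_ball_zero_iff]
    refine lt_of_lt_of_le ?_ hρrad
    rw [show ‖p‖ₑ = ((‖p‖₊ : NNReal) : ENNReal) from rfl, ENNReal.coe_lt_coe, ← NNReal.coe_lt_coe]
    calc (‖p‖₊ : ℝ) = ‖p‖ := rfl
      _ < v := hp
      _ ≤ (r0 : ℝ) / 2 := hvr0
      _ = ((r0 / 2 : NNReal) : ℝ) := by push_cast; ring
  · intro p hp
    rw [Metric.mem_ball, dist_zero_right] at hp
    exact ⟨(hAeq p hp).trans (mul_comm _ _), (hBeq p hp).trans (mul_comm _ _)⟩
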